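/- Let f : ℝ^n → ℝ^n be continuously differentiable with global flow φ, let 𝒪 ⊆ ℝ^n be a compact set, and let T : ℝ^n → [0,∞] be a function. Let x* ∈ 𝒪 be such that T(x*) < ∞, T is continuous at x*, and φ(t,x*) ∈ 𝒪 for every t ∈ [0, T(x*)]. For x with T(x) < ∞ define d(x) := sup{dist(φ(t,x), 𝒪) : t ∈ [0, T(x)]}, where dist denotes Euclidean distance to the set 𝒪. Then d(x*) = 0 and d is continuous at x*: for every ε > 0 there exists δ > 0 such that every x with |x − x*| < δ satisfies T(x) < ∞ and d(x) ≤ ε. -/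

import Mathlib

open Set Metric ENNReal

open Set Metric ENNReal Real

/-- Continuous dependence on initial conditions, bootstrap version: if the reference
solution `h` stays 1-deep inside the region `C` where `f` is Lipschitz, and the initial
distance times `exp (L * b)` is `< 1`, then on `[0, b]` the distance between the two
solutions grows at most exponentially. -/
lemma aux_gronwall {E : Type*} [NormedAddCommGroup E] [NormedSpace ℝ E]
    (f : E → E) (L : NNReal) (C : Set E) (hL : LipschitzOnWith L f C)
    (g h : ℝ → E) (hg : ∀ t, HasDerivAt g (f (g t)) t) (hh : ∀ t, HasDerivAt h (f (h t)) t)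
    (b : ℝ) (hb : 0 ≤ b)
    (hhC : ∀ t ∈ Icc (0:ℝ) b, closedBall (h t) 1 ⊆ C)
    (hδ : dist (g 0) (h 0) * Real.exp (L * b) < 1) :
    ∀ t ∈ Icc (0:ℝ) b, dist (g t) (h t) ≤ dist (g 0) (h 0) * Real.exp (L * t) := by
  set δ : ℝ := dist (g 0) (h 0) with hδdef
  have hδ0 : 0 ≤ δ := dist_nonneg
  have hgc : Continuous g := by
    rw [continuous_iff_continuousAt]; exact fun t => (hg t).continuousAt
  have hhc : Continuous h := by
    rw [continuous_iff_continuousAt]; exact fun t => (hh t).continuousAt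
  have hu : Continuous (fun t => dist (g t) (h t)) := hgc.dist hhc
  set s : Set ℝ := {t | ∀ τ ∈ Icc (0:ℝ) t, dist (g τ) (h τ) ≤ δ * Real.exp (L * τ)} with hs
  have hbound : ∀ τ : ℝ, τ ≤ b → δ * Real.exp (L * τ) < 1 := by
    intro τ hτ
    calc δ * Real.exp (L * τ) ≤ δ * Real.exp (L * b) := by
          apply mul_le_mul_of_nonneg_left _ hδ0
          exact Real.exp_le_exp.2 (mul_le_mul_of_nonneg_left hτ L.2)
      _ < 1 := hδ
  have key : Icc (0:ℝ) b ⊆ s := by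
    apply IsClosed.Icc_subset_of_forall_exists_gt
    · -- closedness of s ∩ Icc 0 b
      apply IsSeqClosed.isClosed
      intro x t hx hlim
      have hxs : ∀ k, x k ∈ s := fun k => (hx k).1
      have hxI : ∀ k, x k ∈ Icc (0:ℝ) b := fun k => (hx k).2
      have htI : t ∈ Icc (0:ℝ) b :=
        isClosed_Icc.mem_of_tendsto hlim (Filter.Eventually.of_forall hxI)
      refine ⟨?_, htI⟩
      intro τ hτ
      rcases lt_or_eq_of_le hτ.2 with hlt | heq
      · -- τ < t : eventually τ ≤ x k
        have : ∀ᶠ k in Filter.atTop, τ < x k := hlim.eventually (eventually_gt_nhds hlt)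
        rcases this.exists with ⟨k, hk⟩
        exact hxs k τ ⟨hτ.1, hk.le⟩
      · -- τ = t : pass to the limit
        subst heq
        have h1 : ∀ k, dist (g (x k)) (h (x k)) ≤ δ * Real.exp (L * x k) := by
          intro k; exact hxs k (x k) ⟨(hxI k).1, le_refl _⟩
        have h2 : Filter.Tendsto (fun k => dist (g (x k)) (h (x k))) Filter.atTop
            (nhds (dist (g τ) (h τ))) := (hu.tendsto τ).comp hlim
        have h3 : Filter.Tendsto (fun k => δ * Real.exp (L * x k)) Filter.atTop
            (nhds (δ * Real.exp (L * τ))) := by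
          have : Continuous (fun y : ℝ => δ * Real.exp (L * y)) := by continuity
          exact (this.tendsto τ).comp hlim
        exact le_of_tendsto_of_tendsto' h2 h3 h1
    · -- 0 ∈ s
      intro τ hτ
      have : τ = 0 := le_antisymm hτ.2 hτ.1
      subst this
      simp [δ]
    · -- induction step
      rintro x ⟨hxs, hx0, hxb⟩ y hy
      have hux : dist (g x) (h x) < 1 := by
        refine lt_of_le_of_lt (hxs x ⟨hx0, le_refl _⟩) (hbound x hxb.le)
      -- continuity: u < 1 near x
      have : ∀ᶠ t in nhds x, dist (g t) (h t) < 1 :=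
        (hu.tendsto x).eventually (eventually_lt_nhds hux)
      rcases Metric.eventually_nhds_iff.1 this with ⟨η, hη0, hη⟩
      set x' : ℝ := min (x + η/2) (min y b) with hx'
      have hxx' : x < x' := by
        apply lt_min (by linarith) (lt_min hy hxb)
      have hx'b : x' ≤ b := le_trans (min_le_right _ _) (min_le_right _ _)
      have hx'y : x' ≤ y := le_trans (min_le_right _ _) (min_le_left _ _)
      have hx'0 : 0 ≤ x' := le_trans hx0 hxx'.le
      -- on [0, x'], both trajectories are in C
      have hmem : ∀ τ ∈ Icc (0:ℝ) x', dist (g τ) (h τ) ≤ 1 := by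
        intro τ hτ
        rcases le_or_gt τ x with hle | hgt
        · exact le_of_lt (lt_of_le_of_lt (hxs τ ⟨hτ.1, hle⟩) (hbound τ (le_trans hle hxb.le)))
        · apply le_of_lt; apply hη
          rw [Real.dist_eq, abs_lt]
          have : τ ≤ x + η/2 := le_trans hτ.2 (min_le_left _ _)
          constructor <;> linarith
      have hgC : ∀ τ ∈ Ico (0:ℝ) x', g τ ∈ C := by
        intro τ hτ
        exact hhC τ ⟨hτ.1, le_trans hτ.2.le hx'b⟩ (mem_closedBall.2 (hmem τ ⟨hτ.1, hτ.2.le⟩))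
      have hhCmem : ∀ τ ∈ Ico (0:ℝ) x', h τ ∈ C := by
        intro τ hτ
        exact hhC τ ⟨hτ.1, le_trans hτ.2.le hx'b⟩ (mem_closedBall_self zero_le_one)
      have := dist_le_of_trajectories_ODE_of_mem
        (v := fun _ => f) (s := fun _ => C) (K := L)
        (fun _ _ => hL)
        (hgc.continuousOn) (fun τ _ => (hg τ).hasDerivWithinAt) hgC
        (hhc.continuousOn) (fun τ _ => (hh τ).hasDerivWithinAt) hhCmem
        (le_refl δ)
      refine ⟨x', ?_, hxx', hx'y⟩
      intro τ hτ
      have h2 := this τ hτ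
      rwa [sub_zero] at h2
  intro t ht
  exact key ht t ⟨ht.1, le_refl _⟩

/-- Well-definedness and continuity at a point of the limit cycle of the "distance"
function `d(x) = sup_{t ∈ [0, T(x)]} dist(φ(t,x), 𝒪)`, where `T` is a time function
that is finite and continuous at `xstar ∈ 𝒪` and the flow from `xstar` stays in the
compact set `𝒪` up to time `T(xstar)`. -/
theorem stmt_3 (n : ℕ) (hn : 1 ≤ n)
    (f : EuclideanSpace ℝ (Fin n) → EuclideanSpace ℝ (Fin n))
    (hf : ContDiff ℝ 1 f)
    (φ : ℝ → EuclideanSpace ℝ (Fin n) → EuclideanSpace ℝ (Fin n))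
    (hφ0 : ∀ x, φ 0 x = x)
    (hφ' : ∀ (t : ℝ) (x : EuclideanSpace ℝ (Fin n)),
      HasDerivAt (fun s => φ s x) (f (φ t x)) t)
    (O : Set (EuclideanSpace ℝ (Fin n))) (hO : IsCompact O) (hOne : O.Nonempty)
    (T : EuclideanSpace ℝ (Fin n) → ℝ≥0∞)
    (xstar : EuclideanSpace ℝ (Fin n)) (hxO : xstar ∈ O)
    (hTfin : T xstar ≠ ⊤)
    (hTcont : ContinuousAt T xstar)
    (hflow : ∀ t ∈ Icc (0:ℝ) (T xstar).toReal, φ t xstar ∈ O)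
    (d : EuclideanSpace ℝ (Fin n) → ℝ)
    (hd : ∀ x, T x ≠ ⊤ →
      d x = sSup ((fun t => infDist (φ t x) O) '' Icc (0:ℝ) (T x).toReal)) :
    d xstar = 0 ∧
    ∀ ε > 0, ∃ δ > 0, ∀ x : EuclideanSpace ℝ (Fin n), ‖x - xstar‖ < δ →
      T x ≠ ⊤ ∧ d x ≤ ε := by
  set T₀ : ℝ := (T xstar).toReal with hT₀def
  have hT₀0 : 0 ≤ T₀ := ENNReal.toReal_nonneg
  set γ : ℝ → EuclideanSpace ℝ (Fin n) := fun t => φ t xstar with hγdef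
  have hγc : Continuous γ := by
    rw [continuous_iff_continuousAt]; exact fun t => (hφ' t xstar).continuousAt
  -- Part 1: d xstar = 0
  have hd0 : d xstar = 0 := by
    rw [hd xstar hTfin, ← hT₀def]
    have himg : (fun t => infDist (φ t xstar) O) '' Icc (0:ℝ) T₀ = {0} := by
      apply Subset.antisymm
      · rintro v ⟨t, ht, rfl⟩
        simp [infDist_zero_of_mem (hflow t ht)]
      · rintro v rfl
        exact ⟨0, ⟨le_refl _, hT₀0⟩, infDist_zero_of_mem (hflow 0 ⟨le_refl _, hT₀0⟩)⟩
    rw [himg, csSup_singleton]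
  refine ⟨hd0, ?_⟩
  intro ε hε
  -- set-up: the Lipschitz region
  set b : ℝ := T₀ + 1 with hbdef
  have hb0 : 0 ≤ b := by linarith
  have hK₀ : IsCompact (γ '' Icc 0 b) := (isCompact_Icc).image hγc
  obtain ⟨R, hR⟩ := hK₀.isBounded.subset_closedBall 0
  set C : Set (EuclideanSpace ℝ (Fin n)) := closedBall 0 (R+1) with hCdef
  have hhC : ∀ t ∈ Icc (0:ℝ) b, closedBall (γ t) 1 ⊆ C := by
    intro t ht z hz
    have h1 : γ t ∈ closedBall (0:EuclideanSpace ℝ (Fin n)) R := hR ⟨t, ht, rfl⟩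
    rw [mem_closedBall] at *
    calc dist z 0 ≤ dist z (γ t) + dist (γ t) 0 := dist_triangle _ _ _
      _ ≤ 1 + R := add_le_add hz h1
      _ = R + 1 := by ring
  -- Lipschitz constant on C
  have hfd : Continuous (fderiv ℝ f) := (hf.continuous_fderiv one_ne_zero)
  obtain ⟨M, hM⟩ := (isCompact_closedBall (0:EuclideanSpace ℝ (Fin n)) (R+1)).exists_bound_of_continuousOn
    hfd.continuousOn
  set L : NNReal := M.toNNReal with hLdef
  have hLip : LipschitzOnWith L f C := by
    apply Convex.lipschitzOnWith_of_nnnorm_fderiv_le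
      (fun x _ => (hf.differentiable one_ne_zero).differentiableAt)
      (fun x hx => ?_) (convex_closedBall _ _)
    have := hM x hx
    rw [← NNReal.coe_le_coe, coe_nnnorm]
    exact this.trans (Real.le_coe_toNNReal M)
  -- ψ := infDist along reference trajectory
  set ψ : ℝ → ℝ := fun t => infDist (γ t) O with hψdef
  have hψc : Continuous ψ := (continuous_infDist_pt O).comp hγc
  have hψT₀ : ψ T₀ = 0 := infDist_zero_of_mem (hflow T₀ ⟨hT₀0, le_refl _⟩)
  -- choose η ∈ (0,1] with ψ ≤ ε/2 on [T₀-η, T₀+η]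
  have hev : ∀ᶠ t in nhds T₀, ψ t < ε/2 := by
    have h1 : ContinuousAt ψ T₀ := hψc.continuousAt
    have := h1.eventually_lt (continuousAt_const (y := ε/2)) (by rw [hψT₀]; linarith)
    exact this
  rcases Metric.eventually_nhds_iff.1 hev with ⟨η₀, hη₀0, hη₀⟩
  set η : ℝ := min (η₀/2) 1 with hηdef
  have hη0 : 0 < η := lt_min (by linarith) one_pos
  have hη1 : η ≤ 1 := min_le_right _ _
  have hψb : ∀ t ∈ Icc (0:ℝ) (T₀ + η), ψ t ≤ ε/2 := by
    intro t ht
    rcases le_or_gt t T₀ with hle | hgt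
    · rw [hψdef]; simp only
      rw [infDist_zero_of_mem (hflow t ⟨ht.1, hle⟩)]; linarith
    · apply le_of_lt; apply hη₀
      rw [Real.dist_eq, abs_lt]
      have : η ≤ η₀/2 := min_le_left _ _
      constructor <;> [skip; skip] <;> nlinarith [ht.2]
  -- neighborhood where T x < T xstar + η
  have hTlt : T xstar < T xstar + ENNReal.ofReal η :=
    ENNReal.lt_add_right hTfin (ENNReal.ofReal_pos.2 hη0).ne'
  have hnhds : T ⁻¹' (Iio (T xstar + ENNReal.ofReal η)) ∈ nhds xstar :=
    hTcont (Iio_mem_nhds hTlt)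
  rcases Metric.mem_nhds_iff.1 hnhds with ⟨δ₁, hδ₁0, hδ₁⟩
  -- Gronwall-based δ
  set r : ℝ := min (ε/2) (1/2) with hrdef
  have hr0 : 0 < r := lt_min (by linarith) (by norm_num)
  set δ₂ : ℝ := r * Real.exp (-(L * b)) with hδ₂def
  have hδ₂0 : 0 < δ₂ := mul_pos hr0 (Real.exp_pos _)
  refine ⟨min δ₁ δ₂, lt_min hδ₁0 hδ₂0, ?_⟩
  intro x hx
  rw [← dist_eq_norm] at hx
  have hxδ₁ : dist x xstar < δ₁ := lt_of_lt_of_le hx (min_le_left _ _)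
  have hxδ₂ : dist x xstar < δ₂ := lt_of_lt_of_le hx (min_le_right _ _)
  have hTx : T x < T xstar + ENNReal.ofReal η := hδ₁ (mem_ball.2 hxδ₁)
  have hTxfin : T x ≠ ⊤ := (lt_of_lt_of_le hTx le_top).ne
  have hTxne : T x ≠ ⊤ := hTxfin
  have hTxtoReal : (T x).toReal ≤ T₀ + η := by
    have h1 : (T x).toReal ≤ (T xstar + ENNReal.ofReal η).toReal :=
      ENNReal.toReal_mono (by finiteness) hTx.le
    rwa [ENNReal.toReal_add hTfin ENNReal.ofReal_ne_top, ENNReal.toReal_ofReal hη0.le] at h1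
  refine ⟨hTxfin, ?_⟩
  -- Gronwall estimate
  have hgron := aux_gronwall f L C hLip (fun t => φ t x) γ (fun t => hφ' t x)
    (fun t => hφ' t xstar) b hb0 hhC ?_
  swap
  · simp only [hγdef, hφ0, dist_eq_norm]
    calc ‖x - xstar‖ * Real.exp (L * b) < δ₂ * Real.exp (L * b) := by
          apply mul_lt_mul_of_pos_right _ (Real.exp_pos _)
          rwa [← dist_eq_norm]
      _ = r := by
          rw [hδ₂def, mul_assoc, ← Real.exp_add, neg_add_cancel, Real.exp_zero, mul_one]
      _ ≤ 1/2 := min_le_right _ _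
      _ < 1 := by norm_num
  -- final bound on d x
  rw [hd x hTxfin]
  apply Real.sSup_le
  · rintro v ⟨t, ht, rfl⟩
    have htb : t ∈ Icc (0:ℝ) b := ⟨ht.1, by
      have := le_trans ht.2 hTxtoReal; linarith⟩
    have h1 : dist (φ t x) (γ t) ≤ dist (φ 0 x) (γ 0) * Real.exp (L * t) :=
      hgron t htb
    have h2 : dist (φ 0 x) (γ 0) * Real.exp (L * t) ≤ ε/2 := by
      have hle : dist (φ 0 x) (γ 0) * Real.exp (L * t) ≤
          dist (φ 0 x) (γ 0) * Real.exp (L * b) := by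
        apply mul_le_mul_of_nonneg_left _ dist_nonneg
        exact Real.exp_le_exp.2 (mul_le_mul_of_nonneg_left htb.2 L.2)
      have hlt : dist (φ 0 x) (γ 0) * Real.exp (L * b) < r := by
        rw [hγdef]; simp only [hφ0]
        calc dist x xstar * Real.exp (L * b) < δ₂ * Real.exp (L * b) :=
              mul_lt_mul_of_pos_right hxδ₂ (Real.exp_pos _)
          _ = r := by
              rw [hδ₂def, mul_assoc, ← Real.exp_add, neg_add_cancel, Real.exp_zero, mul_one]
      have : r ≤ ε/2 := min_le_left _ _
      linarith
    calc infDist (φ t x) O ≤ infDist (γ t) O + dist (φ t x) (γ t) :=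
          infDist_le_infDist_add_dist
      _ ≤ ε/2 + ε/2 := add_le_add (hψb t ⟨ht.1, le_trans ht.2 hTxtoReal⟩) (le_trans h1 h2)
      _ = ε := by ring
  · exact hε.le
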